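/- Nonlinear Gronwall inequality: Let a, b, Y : ℝ → ℝ be nonnegative continuous functions, let c ≥ 0 and 0 ≤ α < 1, and let t₀ ∈ ℝ. Suppose that for all t ≥ t₀, Y(t) ≤ c + ∫_{t₀}^t (a(s)·Y(s) + b(s)·Y(s)^α) ds. Then for all t ≥ t₀, Y(t) ≤ [ c^{1−α}·exp((1−α)·∫_{t₀}^t a(s) ds) + (1−α)·∫_{t₀}^t b(s)·exp((1−α)·∫_s^t a(r) dr) ds ]^{1/(1−α)}. -/

import Mathlib

open intervalIntegral

private lemma gronwall_pos (a b Y : ℝ → ℝ) (ha : Continuous a) (hb : Continuous b)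
    (hY : Continuous Y) (ha0 : ∀ t, 0 ≤ a t) (hb0 : ∀ t, 0 ≤ b t)
    (hY0 : ∀ t, 0 ≤ Y t) (c α t₀ : ℝ) (hc : 0 < c) (hα0 : 0 ≤ α) (hα1 : α < 1)
    (h : ∀ t ≥ t₀, Y t ≤ c + ∫ s in t₀..t, (a s * Y s + b s * Y s ^ α)) :
    ∀ t ≥ t₀,
      Y t ≤ (c ^ (1 - α) * Real.exp ((1 - α) * ∫ s in t₀..t, a s) +
        (1 - α) * ∫ s in t₀..t, b s * Real.exp ((1 - α) * ∫ r in s..t, a r)) ^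
          ((1 : ℝ) / (1 - α)) := by
  intro t₁ ht₁
  have hβ : (0:ℝ) < 1 - α := by linarith
  set f : ℝ → ℝ := fun s => a s * Y s + b s * Y s ^ α with hfdef
  have hf : Continuous f := (ha.mul hY).add (hb.mul (hY.rpow_const fun x => Or.inr hα0))
  set Z : ℝ → ℝ := fun t => c + ∫ s in t₀..t, f s with hZdef
  have hZcont : Continuous Z :=
    continuous_const.add (intervalIntegral.continuous_primitive
      (fun u v => hf.intervalIntegrable u v) t₀)
  have hZpos : ∀ t ≥ t₀, 0 < Z t := by
    intro t ht
    have : 0 ≤ ∫ s in t₀..t, f s := intervalIntegral.integral_nonneg ht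
      (fun s _ => add_nonneg (mul_nonneg (ha0 s) (hY0 s))
        (mul_nonneg (hb0 s) (Real.rpow_nonneg (hY0 s) α)))
    simpa [hZdef] using add_pos_of_pos_of_nonneg hc this
  have hYZ : ∀ t ≥ t₀, Y t ≤ Z t := h
  set A : ℝ → ℝ := fun t => ∫ s in t₀..t, a s with hAdef
  have hAcont : Continuous A :=
    intervalIntegral.continuous_primitive (fun u v => ha.intervalIntegrable u v) t₀
  have hA : ∀ x, HasDerivAt A (a x) x := fun x =>
    intervalIntegral.integral_hasDerivAt_right (ha.intervalIntegrable t₀ x)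
      (ha.stronglyMeasurable.stronglyMeasurableAtFilter) ha.continuousAt
  set E : ℝ → ℝ := fun t => Real.exp (-(1 - α) * A t) with hEdef
  have hEcont : Continuous E := Real.continuous_exp.comp (continuous_const.mul hAcont)
  have hEpos : ∀ t, 0 < E t := fun t => Real.exp_pos _
  have hE : ∀ x, HasDerivAt E (-(1 - α) * a x * E x) x := by
    intro x
    have := (((hA x).const_mul (-(1 - α))).exp)
    simpa [hEdef, mul_comm] using this
  set g : ℝ → ℝ := fun s => b s * E s with hgdef
  have hg : Continuous g := hb.mul hEcont
  set B : ℝ → ℝ := fun t => ∫ s in t₀..t, g s with hBdef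
  have hBcont : Continuous B :=
    intervalIntegral.continuous_primitive (fun u v => hg.intervalIntegrable u v) t₀
  have hB : ∀ x, HasDerivAt B (g x) x := fun x =>
    intervalIntegral.integral_hasDerivAt_right (hg.intervalIntegrable t₀ x)
      (hg.stronglyMeasurable.stronglyMeasurableAtFilter) hg.continuousAt
  set W : ℝ → ℝ := fun t => Z t ^ (1 - α) with hWdef
  have hWcont : Continuous W := hZcont.rpow_const fun x => Or.inr hβ.le
  set V : ℝ → ℝ := fun t => W t * E t - (1 - α) * B t with hVdef
  -- derivative of V on the interior
  have hVderiv : ∀ x ∈ Set.Ioo t₀ t₁, HasDerivAt V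
      ((f x * (1 - α) * Z x ^ (1 - α - 1)) * E x + W x * (-(1 - α) * a x * E x)
        - (1 - α) * g x) x := by
    intro x hx
    have hZx : 0 < Z x := hZpos x hx.1.le
    have hZ' : HasDerivAt Z (f x) x := by
      have := intervalIntegral.integral_hasDerivAt_right (hf.intervalIntegrable t₀ x)
        (hf.stronglyMeasurable.stronglyMeasurableAtFilter) hf.continuousAt
      simpa [hZdef] using this.const_add c
    have hW' : HasDerivAt W (f x * (1 - α) * Z x ^ (1 - α - 1)) x :=
      hZ'.rpow_const (Or.inl hZx.ne')
    exact ((hW'.mul (hE x)).sub ((hB x).const_mul (1 - α)))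
  have hVd0 : ∀ x ∈ Set.Ioo t₀ t₁, deriv V x ≤ 0 := by
    intro x hx
    rw [(hVderiv x hx).deriv]
    have hZx : 0 < Z x := hZpos x hx.1.le
    have hYZx : Y x ≤ Z x := hYZ x hx.1.le
    -- key pointwise inequality : f x * Z x ^ (-α) ≤ a x * W x + b x
    have key : f x * Z x ^ (1 - α - 1) ≤ a x * W x + b x := by
      have h1 : f x ≤ a x * Z x + b x * Z x ^ α := by
        have := Real.rpow_le_rpow (hY0 x) hYZx hα0
        have h2 := mul_le_mul_of_nonneg_left hYZx (ha0 x)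
        have h3 := mul_le_mul_of_nonneg_left this (hb0 x)
        simpa [hfdef] using add_le_add h2 h3
      have hpow : (0:ℝ) ≤ Z x ^ (1 - α - 1) := Real.rpow_nonneg hZx.le _
      calc f x * Z x ^ (1 - α - 1) ≤ (a x * Z x + b x * Z x ^ α) * Z x ^ (1 - α - 1) :=
            mul_le_mul_of_nonneg_right h1 hpow
        _ = a x * W x + b x := by
            have e1 : Z x * Z x ^ (1 - α - 1) = Z x ^ (1 - α) := by
              have hzz := Real.rpow_add hZx 1 (1 - α - 1)
              rw [Real.rpow_one] at hzz
              rw [← hzz]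
              congr 1
              ring
            have e2 : Z x ^ α * Z x ^ (1 - α - 1) = 1 := by
              rw [← Real.rpow_add hZx]; norm_num
            calc (a x * Z x + b x * Z x ^ α) * Z x ^ (1 - α - 1)
                = a x * (Z x * Z x ^ (1 - α - 1)) + b x * (Z x ^ α * Z x ^ (1 - α - 1)) := by
                  ring
              _ = a x * W x + b x := by rw [e1, e2, mul_one]
    have hEx := (hEpos x).le
    have h5 := mul_le_mul_of_nonneg_right key hEx
    have h6 := mul_le_mul_of_nonneg_left h5 hβ.le
    simp only [hgdef]
    nlinarith [h6]
  have hVanti : AntitoneOn V (Set.Icc t₀ t₁) := by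
    apply antitoneOn_of_deriv_nonpos (convex_Icc t₀ t₁)
      ((hWcont.mul hEcont).sub (continuous_const.mul hBcont)).continuousOn
    · intro x hx
      rw [interior_Icc] at hx
      exact (hVderiv x hx).differentiableAt.differentiableWithinAt
    · intro x hx
      rw [interior_Icc] at hx
      exact hVd0 x hx
  have hVt : V t₁ ≤ V t₀ := hVanti (Set.left_mem_Icc.2 ht₁) (Set.mem_Icc.2 ⟨ht₁, le_refl _⟩) ht₁
  have hVt₀ : V t₀ = c ^ (1 - α) := by
    simp [hVdef, hWdef, hZdef, hEdef, hAdef, hBdef]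
  rw [hVt₀] at hVt
  -- from V t₁ ≤ c^(1-α) deduce bound on W t₁
  have hWbound : W t₁ ≤ (c ^ (1 - α) + (1 - α) * B t₁) * Real.exp ((1 - α) * A t₁) := by
    have h1 : W t₁ * E t₁ ≤ c ^ (1 - α) + (1 - α) * B t₁ := by
      have := hVt
      simp only [hVdef] at this
      linarith
    have h2 : E t₁ * Real.exp ((1 - α) * A t₁) = 1 := by
      rw [hEdef]; rw [← Real.exp_add]; ring_nf; exact Real.exp_zero
    calc W t₁ = W t₁ * E t₁ * Real.exp ((1 - α) * A t₁) := by
          rw [mul_assoc, h2, mul_one]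
      _ ≤ (c ^ (1 - α) + (1 - α) * B t₁) * Real.exp ((1 - α) * A t₁) :=
          mul_le_mul_of_nonneg_right h1 (Real.exp_pos _).le
  -- rewrite the RHS
  have hRHS : (c ^ (1 - α) + (1 - α) * B t₁) * Real.exp ((1 - α) * A t₁) =
      c ^ (1 - α) * Real.exp ((1 - α) * ∫ s in t₀..t₁, a s) +
        (1 - α) * ∫ s in t₀..t₁, b s * Real.exp ((1 - α) * ∫ r in s..t₁, a r) := by
    have hint : B t₁ * Real.exp ((1 - α) * A t₁) =
        ∫ s in t₀..t₁, b s * Real.exp ((1 - α) * ∫ r in s..t₁, a r) := by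
      rw [hBdef, ← intervalIntegral.integral_mul_const]
      apply intervalIntegral.integral_congr
      intro s _
      have hsub : (∫ r in s..t₁, a r) = A t₁ - A s :=
        (intervalIntegral.integral_interval_sub_left (ha.intervalIntegrable t₀ t₁)
          (ha.intervalIntegrable t₀ s)).symm
      simp only [hgdef, hEdef, hsub, mul_assoc, ← Real.exp_add]
      congr 2
      ring
    calc (c ^ (1 - α) + (1 - α) * B t₁) * Real.exp ((1 - α) * A t₁)
        = c ^ (1 - α) * Real.exp ((1 - α) * A t₁)
          + (1 - α) * (B t₁ * Real.exp ((1 - α) * A t₁)) := by ring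
      _ = _ := by rw [hint]
  rw [hRHS] at hWbound
  -- conclude
  have hZW : Z t₁ = W t₁ ^ ((1:ℝ) / (1 - α)) := by
    rw [one_div]
    exact (Real.rpow_rpow_inv (hZpos t₁ ht₁).le hβ.ne').symm
  calc Y t₁ ≤ Z t₁ := hYZ t₁ ht₁
    _ = W t₁ ^ ((1:ℝ) / (1 - α)) := hZW
    _ ≤ _ := Real.rpow_le_rpow (Real.rpow_nonneg (hZpos t₁ ht₁).le _) hWbound
        (by positivity)

theorem stmt_8 (a b Y : ℝ → ℝ) (ha : Continuous a) (hb : Continuous b)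
    (hY : Continuous Y) (ha0 : ∀ t, 0 ≤ a t) (hb0 : ∀ t, 0 ≤ b t)
    (hY0 : ∀ t, 0 ≤ Y t) (c α t₀ : ℝ) (hc : 0 ≤ c) (hα0 : 0 ≤ α) (hα1 : α < 1)
    (h : ∀ t ≥ t₀, Y t ≤ c + ∫ s in t₀..t, (a s * Y s + b s * Y s ^ α)) :
    ∀ t ≥ t₀,
      Y t ≤ (c ^ (1 - α) * Real.exp ((1 - α) * ∫ s in t₀..t, a s) +
        (1 - α) * ∫ s in t₀..t, b s * Real.exp ((1 - α) * ∫ r in s..t, a r)) ^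
          ((1 : ℝ) / (1 - α)) := by
  intro t₁ ht₁
  have hβ : (0:ℝ) < 1 - α := by linarith
  set K := Real.exp ((1 - α) * ∫ s in t₀..t₁, a s) with hK
  set L := (1 - α) * ∫ s in t₀..t₁, b s * Real.exp ((1 - α) * ∫ r in s..t₁, a r) with hL
  set G : ℝ → ℝ := fun x => (x ^ (1 - α) * K + L) ^ ((1:ℝ) / (1 - α)) with hG
  have key : ∀ ε > (0:ℝ), Y t₁ ≤ G (c + ε) := by
    intro ε hε
    have h' : ∀ t ≥ t₀, Y t ≤ (c + ε) + ∫ s in t₀..t, (a s * Y s + b s * Y s ^ α) := by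
      intro t ht; linarith [h t ht]
    exact gronwall_pos a b Y ha hb hY ha0 hb0 hY0 (c + ε) α t₀ (by linarith) hα0 hα1 h' t₁ ht₁
  have hGc : ContinuousAt G c := by
    apply ContinuousAt.rpow_const
    · exact ((Real.continuousAt_rpow_const c (1 - α) (Or.inr hβ.le)).mul
        continuousAt_const).add continuousAt_const
    · exact Or.inr (by positivity)
  have htend : Filter.Tendsto (fun ε => G (c + ε)) (nhdsWithin 0 (Set.Ioi 0)) (nhds (G c)) := by
    have : Filter.Tendsto (fun ε : ℝ => c + ε) (nhdsWithin 0 (Set.Ioi 0)) (nhds c) := by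
      have : Filter.Tendsto (fun ε : ℝ => c + ε) (nhds 0) (nhds c) := by
        simpa only [add_zero] using (show Continuous (fun ε : ℝ => c + ε) from continuous_const.add continuous_id).tendsto (0:ℝ)
      exact this.mono_left nhdsWithin_le_nhds
    exact hGc.tendsto.comp this
  exact ge_of_tendsto htend (eventually_nhdsWithin_of_forall fun ε hε => key ε hε)
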